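/- Let V be a finite-dimensional complex vector space with a commutative bi-semilinear product · satisfying semi-associativity x·(y·(z·u)) = z·(y·(x·u)), compatibility (u·v|w) = (u·w|v) with a Hermitian inner product, simplicity (no nonzero proper ideals), and nonzero multiplication. Then every left-multiplication map M_x (x ≠ 0) is injective, and V is one-dimensional. -/

import Mathlib

open scoped InnerProductSpace ComplexConjugate

theorem stmt_10 {V : Type*} [NormedAddCommGroup V] [InnerProductSpace ℂ V]
    [FiniteDimensional ℂ V]
    (mul : V → V → V)
    (haddl : ∀ x x' y : V, mul (x + x') y = mul x y + mul x' y)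
    (haddr : ∀ x y y' : V, mul x (y + y') = mul x y + mul x y')
    (hsmull : ∀ (c : ℂ) (x y : V), mul (c • x) y = conj c • mul x y)
    (hsmulr : ∀ (c : ℂ) (x y : V), mul x (c • y) = conj c • mul x y)
    (hcomm : ∀ x y : V, mul x y = mul y x)
    (hcompat : ∀ u v w : V, ⟪mul u v, w⟫_ℂ = ⟪mul u w, v⟫_ℂ)
    (hsemiassoc : ∀ x y z u : V, mul x (mul y (mul z u)) = mul z (mul y (mul x u)))
    (hsimple : ∀ I : Submodule ℂ V, (∀ x ∈ I, ∀ y : V, mul x y ∈ I) → I = ⊥ ∨ I = ⊤)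
    (hnonzero : ∃ x y : V, mul x y ≠ 0) :
    (∀ x : V, x ≠ 0 → Function.Injective (mul x)) ∧ Module.finrank ℂ V = 1 := by
  obtain ⟨x0, y0, hxy0⟩ := hnonzero
  haveI : Nontrivial V := nontrivial_of_ne (mul x0 y0) 0 hxy0
  have hmul0 : ∀ x : V, mul x 0 = 0 := by
    intro x
    have h := hsmulr 0 x 0
    simpa using h
  have hmul0' : ∀ y : V, mul 0 y = 0 := fun y => by rw [hcomm]; exact hmul0 y
  -- Lemma B : nonzero elements do not annihilate
  have hB : ∀ x : V, x ≠ 0 → ∃ y, mul x y ≠ 0 := by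
    intro x hx
    by_contra h
    push_neg at h
    set Ann : Submodule ℂ V :=
      { carrier := {z | ∀ y, mul z y = 0}
        add_mem' := by intro a b ha hb y; rw [haddl, ha, hb, add_zero]
        zero_mem' := fun y => hmul0' y
        smul_mem' := by intro c a ha y; rw [hsmull, ha y, smul_zero] } with hAnn
    have hid : ∀ z ∈ Ann, ∀ y : V, mul z y ∈ Ann := by
      intro z hz y w
      rw [hcomm, hz, hmul0]
    rcases hsimple Ann hid with hbot | htop
    · have hxA : x ∈ Ann := h
      rw [hbot] at hxA
      exact hx hxA
    · have hx0A : x0 ∈ Ann := Submodule.eq_top_iff'.mp htop x0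
      exact hxy0 (hx0A y0)
  -- Lemma A : mul x (mul x ·) is a real scalar
  have hA : ∀ x : V, ∃ r : ℝ, ∀ v, mul x (mul x v) = (r : ℂ) • v := by
    intro x
    set T : V →ₗ[ℂ] V :=
      { toFun := fun v => mul x (mul x v)
        map_add' := by
          intro a b
          show mul x (mul x (a + b)) = mul x (mul x a) + mul x (mul x b)
          rw [haddr, haddr]
        map_smul' := by
          intro c a
          show mul x (mul x (c • a)) = c • mul x (mul x a)
          rw [hsmulr, hsmulr, Complex.conj_conj] } with hT
    obtain ⟨μ, hμ⟩ := Module.End.exists_eigenvalue T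
    obtain ⟨v, hv⟩ := hμ.exists_hasEigenvector
    have hv0 : v ≠ 0 := hv.2
    have hTv : mul x (mul x v) = μ • v := hv.apply_eq_smul
    have key : (starRingEnd ℂ) μ * (‖v‖ : ℂ) ^ 2 = (‖mul x v‖ : ℂ) ^ 2 := by
      have h1 : ⟪mul x (mul x v), v⟫_ℂ = ⟪mul x v, mul x v⟫_ℂ := hcompat x (mul x v) v
      rw [hTv, inner_smul_left, inner_self_eq_norm_sq_to_K, inner_self_eq_norm_sq_to_K] at h1
      exact h1
    set r : ℝ := ‖mul x v‖ ^ 2 / ‖v‖ ^ 2 with hrdef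
    have hv00 : (‖v‖ : ℂ) ^ 2 ≠ 0 := by
      simp [hv0, norm_eq_zero]
    have hconjμ : (starRingEnd ℂ) μ = (r : ℂ) := by
      rw [hrdef, Complex.ofReal_div, Complex.ofReal_pow, Complex.ofReal_pow, eq_div_iff hv00]
      exact key
    have hμr : μ = (r : ℂ) := by
      have h2 := congrArg (starRingEnd ℂ) hconjμ
      simpa [Complex.conj_ofReal] using h2
    refine ⟨r, ?_⟩
    set I : Submodule ℂ V :=
      { carrier := {w | mul x (mul x w) = (r : ℂ) • w}
        add_mem' := by
          intro a b ha hb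
          simp only [Set.mem_setOf_eq] at *
          rw [haddr, haddr, ha, hb, smul_add]
        zero_mem' := by simp [hmul0]
        smul_mem' := by
          intro c a ha
          simp only [Set.mem_setOf_eq] at *
          rw [hsmulr, hsmulr, ha, Complex.conj_conj, smul_comm] } with hI
    have hid : ∀ w ∈ I, ∀ y : V, mul w y ∈ I := by
      intro w hw y
      have hw' : mul x (mul x w) = (r : ℂ) • w := hw
      show mul x (mul x (mul w y)) = (r : ℂ) • mul w y
      rw [hcomm w y, hsemiassoc x x y w, hw', hsmulr, Complex.conj_ofReal]
    rcases hsimple I hid with hbot | htop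
    · exfalso
      have hvI : v ∈ I := by
        show mul x (mul x v) = (r : ℂ) • v
        rw [hTv, hμr]
      rw [hbot] at hvI
      exact hv0 hvI
    · intro w
      exact Submodule.eq_top_iff'.mp htop w
  -- positivity
  have hApos : ∀ x : V, x ≠ 0 → ∃ r : ℝ, r ≠ 0 ∧ ∀ v, mul x (mul x v) = (r : ℂ) • v := by
    intro x hx
    obtain ⟨r, hr⟩ := hA x
    refine ⟨r, ?_, hr⟩
    intro h0
    obtain ⟨y, hy⟩ := hB x hx
    have h1 : ⟪mul x (mul x y), y⟫_ℂ = ⟪mul x y, mul x y⟫_ℂ := hcompat x (mul x y) y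
    rw [hr y, h0] at h1
    simp only [Complex.ofReal_zero, zero_smul, inner_zero_left] at h1
    exact hy (inner_self_eq_zero.mp h1.symm)
  -- injectivity
  have hinj : ∀ x : V, x ≠ 0 → Function.Injective (mul x) := by
    intro x hx a b hab
    obtain ⟨r, hr0, hr⟩ := hApos x hx
    have h2 : mul x (mul x a) = mul x (mul x b) := by rw [hab]
    rw [hr a, hr b] at h2
    have hrc : (r : ℂ) ≠ 0 := by exact_mod_cast hr0
    exact smul_right_injective V hrc h2
  refine ⟨hinj, ?_⟩
  -- Lemma C : mul x (mul y ·) is scalar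
  have hC : ∀ x y : V, ∃ c : ℂ, ∀ v, mul x (mul y v) = c • v := by
    intro x y
    obtain ⟨rx, hrx⟩ := hA x
    obtain ⟨ry, hry⟩ := hA y
    obtain ⟨rs, hrs⟩ := hA (x + y)
    obtain ⟨rt, hrt⟩ := hA (x + Complex.I • y)
    refine ⟨((rs : ℂ) - rx - ry - Complex.I * ((rt : ℂ) - rx - ry)) / 2, ?_⟩
    intro v
    have e1 : mul x (mul y v) + mul y (mul x v) = ((rs : ℂ) - rx - ry) • v := by
      have h := hrs v
      rw [haddl x y (mul (x + y) v), haddl x y v, haddr, haddr, hrx v, hry v] at h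
      have h2 : mul x (mul y v) + mul y (mul x v)
          = (rs : ℂ) • v - ((rx : ℂ) • v + (ry : ℂ) • v) := by
        rw [← h]; abel
      rw [h2, sub_smul, sub_smul]; abel
    have e2 : mul x (mul y v) - mul y (mul x v)
        = (- Complex.I * ((rt : ℂ) - rx - ry)) • v := by
      have h := hrt v
      rw [haddl x (Complex.I • y) (mul (x + Complex.I • y) v),
        haddl x (Complex.I • y) v, hsmull, haddr, hsmulr, hsmull, haddr, hsmulr,
        hrx v, hry v] at h
      simp only [map_neg, Complex.conj_I, Complex.conj_conj, smul_add, smul_smul, smul_neg,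
        neg_smul, neg_neg, neg_mul, mul_neg, ← mul_assoc, Complex.I_mul_I, one_mul,
        one_smul] at h
      have h2 : Complex.I • mul x (mul y v) - Complex.I • mul y (mul x v)
          = (rt : ℂ) • v - (rx : ℂ) • v - (ry : ℂ) • v := by
        rw [← h]; abel
      have h3 := congrArg (fun u : V => (-Complex.I) • u) h2
      simp only [smul_sub, smul_smul, neg_mul, Complex.I_mul_I, neg_neg, one_smul] at h3
      rw [h3, mul_sub, mul_sub, sub_smul, sub_smul]
      module
    have h4 : (2 : ℂ) • mul x (mul y v)
        = (((rs : ℂ) - rx - ry) + (- Complex.I * ((rt : ℂ) - rx - ry))) • v := by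
      rw [two_smul, add_smul, ← e1, ← e2]; abel
    have h5 : (2 : ℂ) • ((((rs : ℂ) - rx - ry - Complex.I * ((rt : ℂ) - rx - ry)) / 2) • v)
        = (2 : ℂ) • mul x (mul y v) := by
      rw [h4, smul_smul]
      congr 1
      ring
    have h6 := smul_right_injective V (two_ne_zero' ℂ) h5
    exact h6.symm
  -- dimension one
  have hge : 0 < Module.finrank ℂ V := Module.finrank_pos
  have hle : Module.finrank ℂ V ≤ 1 := by
    obtain ⟨x, hx⟩ := exists_ne (0 : V)
    apply finrank_le_one x
    intro w
    obtain ⟨rx, hrx0, hrx⟩ := hApos x hx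
    obtain ⟨c, hc⟩ := hC x w
    refine ⟨c / rx, ?_⟩
    by_contra hne
    set z : V := w - (c / (rx : ℂ)) • x with hz
    have hz0 : z ≠ 0 := by
      intro h0
      apply hne
      rw [hz, sub_eq_zero] at h0
      exact h0.symm
    have hzero : ∀ v, mul x (mul z v) = 0 := by
      intro v
      have hw' : w = z + (c / (rx : ℂ)) • x := by rw [hz]; abel
      have h1 : mul x (mul w v)
          = mul x (mul z v) + (c / (rx : ℂ)) • ((rx : ℂ) • v) := by
        rw [hw', haddl, hsmull, haddr, hsmulr, Complex.conj_conj, hrx v]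
      rw [hc v, smul_smul] at h1
      have hcc : c / (rx : ℂ) * rx = c := by
        have : (rx : ℂ) ≠ 0 := by exact_mod_cast hrx0
        field_simp
      rw [hcc] at h1
      exact (right_eq_add.mp h1)
    obtain ⟨v0, hv0⟩ := exists_ne (0 : V)
    have hzv : mul z v0 ≠ 0 := by
      intro h0
      apply hv0
      apply hinj z hz0
      rw [h0, hmul0]
    apply hzv
    apply hinj x hx
    rw [hzero v0, hmul0]
  omega
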